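/- arXiv:2105.12893 — 2 statements merged into one kernel-verified Lean document; each statement's English description precedes it below -/
import Mathlib

section
/- Let θ₁,…,θ_m ∈ Θ be candidate parameters, let X₁,…,X_N be an i.i.d. sample from the distribution with CDF F^{θ₀}, and for each i let Y₁^{θ_i},…,Y_n^{θ_i} be an i.i.d. sample from the distribution with CDF F^{θ_i}, with F_N^{θ₀} and F_n^{θ_i} the corresponding empirical distribution functions. Define the two-sample eligibility set 𝓔̂_m^v = { θ_i : sup_{x∈ℝ} |F_n^{θ_i}(x) − F_N^{θ₀}(x)| ≤ √((n+N)/(nN)) · √(−(1/2)log(α/2)) }. For any ε, ε₁, ε₂ > 0 with ε₁ + ε₂ < ε, if nN/(n+N) > (−(1/2)log(α/2)) / (ε − ε₁ − ε₂)², then ℙ( ∃ i ∈ {1,…,m} such that sup_{x∈ℝ} |F^{θ_i}(x) − F^{θ₀}(x)| > ε and θ_i ∈ 𝓔̂_m^v ) ≤ 2m( e^{−2nε₁²} + e^{−2Nε₂²} ). -/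
open MeasureTheory ProbabilityTheory Filter

/-- Empirical distribution function of a finite sample of real-valued random variables. -/
noncomputable def ecdfFin {Ω : Type*} {M : ℕ} (Z : Fin M → Ω → ℝ) (ω : Ω) (x : ℝ) : ℝ :=
  (M : ℝ)⁻¹ * ∑ i, if Z i ω ≤ x then (1 : ℝ) else 0

/-- The empirical distribution function takes values in `[0, 1]`. -/
lemma ecdfFin_mem_Icc {Ω : Type*} {M : ℕ} (Z : Fin M → Ω → ℝ) (ω : Ω) (x : ℝ) :
    ecdfFin Z ω x ∈ Set.Icc (0:ℝ) 1 := by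
  have h0 : (0:ℝ) ≤ ∑ i, if Z i ω ≤ x then (1 : ℝ) else 0 :=
    Finset.sum_nonneg fun i _ => by positivity
  have h1 : (∑ i, if Z i ω ≤ x then (1 : ℝ) else 0) ≤ M := by
    calc (∑ i, if Z i ω ≤ x then (1 : ℝ) else 0) ≤ ∑ _i : Fin M, (1:ℝ) :=
          Finset.sum_le_sum fun i _ => by split <;> norm_num
      _ = M := by simp
  constructor
  · unfold ecdfFin; positivity
  · unfold ecdfFin
    rcases Nat.eq_zero_or_pos M with hM | hM
    · subst hM; simp
    · have hMpos : (0:ℝ) < M := by exact_mod_cast hM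
      rw [inv_mul_le_iff₀ hMpos, mul_one]
      exact h1

/-- Hoeffding-type bound on the moment generating function of a centered Bernoulli
random variable: `p·e^{t(1-p)} + (1-p)·e^{-tp} ≤ e^{t²/8}`. -/
lemma bernoulli_mgf_le {p : ℝ} (hp0 : 0 ≤ p) (hp1 : p ≤ 1) (t : ℝ) :
    p * Real.exp (t * (1 - p)) + (1 - p) * Real.exp (-(t * p)) ≤ Real.exp (t ^ 2 / 8) := by
  have hD : ∀ s : ℝ, 0 < 1 - p + p * Real.exp s := by
    intro s
    rcases lt_or_eq_of_le hp1 with h | h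
    · have := Real.exp_pos s; nlinarith
    · subst h; simpa using Real.exp_pos s
  have hD' : ∀ s : ℝ, HasDerivAt (fun s => 1 - p + p * Real.exp s) (p * Real.exp s) s :=
    fun s => ((Real.hasDerivAt_exp s).const_mul p).const_add (1 - p)
  set f : ℝ → ℝ := fun s => s ^ 2 / 8 + s * p - Real.log (1 - p + p * Real.exp s) with hfdef
  set g : ℝ → ℝ := fun s => s / 4 + p - p * Real.exp s / (1 - p + p * Real.exp s) with hgdef
  have hf' : ∀ s, HasDerivAt f (g s) s := by
    intro s
    have h1 : HasDerivAt (fun s : ℝ => s ^ 2 / 8 + s * p) (s / 4 + p) s := by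
      have := ((hasDerivAt_pow 2 s).div_const 8).add ((hasDerivAt_id s).mul_const p)
      refine this.congr_deriv ?_
      push_cast
      ring
    have h2 : HasDerivAt (fun s => Real.log (1 - p + p * Real.exp s))
        (p * Real.exp s / (1 - p + p * Real.exp s)) s := (hD' s).log (hD s).ne'
    exact h1.sub h2
  have hg' : ∀ s, HasDerivAt g
      (1 / 4 - p * Real.exp s * (1 - p) / (1 - p + p * Real.exp s) ^ 2) s := by
    intro s
    have h1 : HasDerivAt (fun s : ℝ => s / 4 + p) (1 / 4) s :=
      ((hasDerivAt_id s).div_const 4).add_const p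
    have h2 : HasDerivAt (fun s => p * Real.exp s / (1 - p + p * Real.exp s))
        ((p * Real.exp s * (1 - p + p * Real.exp s) - p * Real.exp s * (p * Real.exp s)) /
          (1 - p + p * Real.exp s) ^ 2) s :=
      ((Real.hasDerivAt_exp s).const_mul p).div (hD' s) (hD s).ne'
    have h3 := h1.sub h2
    refine h3.congr_deriv ?_
    have hs := (hD s).ne'
    ring
  have hg'nonneg : ∀ s : ℝ, 0 ≤ 1 / 4 - p * Real.exp s * (1 - p) / (1 - p + p * Real.exp s) ^ 2 := by
    intro s
    rw [sub_nonneg, div_le_iff₀ (pow_pos (hD s) 2)]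
    nlinarith [sq_nonneg (p * Real.exp s - (1 - p))]
  have hgmono : Monotone g :=
    monotone_of_deriv_nonneg (fun s => (hg' s).differentiableAt)
      (fun s => by rw [(hg' s).deriv]; exact hg'nonneg s)
  have hg0 : g 0 = 0 := by
    show (0:ℝ) / 4 + p - p * Real.exp 0 / (1 - p + p * Real.exp 0) = 0
    rw [Real.exp_zero]
    have h1 : (1:ℝ) - p + p * 1 = 1 := by ring
    rw [h1]
    ring
  have hf0 : f 0 = 0 := by
    show (0:ℝ) ^ 2 / 8 + 0 * p - Real.log (1 - p + p * Real.exp 0) = 0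
    rw [Real.exp_zero]
    have h1 : (1:ℝ) - p + p * 1 = 1 := by ring
    rw [h1, Real.log_one]
    ring
  have hfdiff : Differentiable ℝ f := fun s => (hf' s).differentiableAt
  have hfnn : ∀ s : ℝ, 0 ≤ f s := by
    intro s
    rcases le_total 0 s with hs | hs
    · have hmono : MonotoneOn f (Set.Ici 0) := by
        apply monotoneOn_of_deriv_nonneg (convex_Ici 0) hfdiff.continuous.continuousOn
          hfdiff.differentiableOn
        intro x hx
        rw [(hf' x).deriv]
        have : g 0 ≤ g x := hgmono (le_of_lt (by simpa using hx))
        linarith [hg0]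
      calc (0:ℝ) = f 0 := hf0.symm
        _ ≤ f s := hmono (Set.mem_Ici.mpr le_rfl) (Set.mem_Ici.mpr hs) hs
    · have hanti : AntitoneOn f (Set.Iic 0) := by
        apply antitoneOn_of_deriv_nonpos (convex_Iic 0) hfdiff.continuous.continuousOn
          hfdiff.differentiableOn
        intro x hx
        rw [(hf' x).deriv]
        have : g x ≤ g 0 := hgmono (le_of_lt (by simpa using hx))
        linarith [hg0]
      calc (0:ℝ) = f 0 := hf0.symm
        _ ≤ f s := hanti (Set.mem_Iic.mpr hs) (Set.mem_Iic.mpr le_rfl) hs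
  have key : 1 - p + p * Real.exp t ≤ Real.exp (t ^ 2 / 8 + t * p) := by
    have h : (0:ℝ) ≤ t ^ 2 / 8 + t * p - Real.log (1 - p + p * Real.exp t) := hfnn t
    have hlog : Real.log (1 - p + p * Real.exp t) ≤ t ^ 2 / 8 + t * p := by linarith
    calc 1 - p + p * Real.exp t = Real.exp (Real.log (1 - p + p * Real.exp t)) :=
          (Real.exp_log (hD t)).symm
      _ ≤ Real.exp (t ^ 2 / 8 + t * p) := Real.exp_le_exp.mpr hlog
  calc p * Real.exp (t * (1 - p)) + (1 - p) * Real.exp (-(t * p))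
      = Real.exp (-(t * p)) * (1 - p + p * Real.exp t) := by
        rw [show t * (1 - p) = -(t * p) + t by ring, Real.exp_add]
        ring
    _ ≤ Real.exp (-(t * p)) * Real.exp (t ^ 2 / 8 + t * p) :=
        mul_le_mul_of_nonneg_left key (Real.exp_pos _).le
    _ = Real.exp (t ^ 2 / 8) := by rw [← Real.exp_add]; ring_nf

/-- A subfamily (along an injective index map) of an independent family of real random
variables is independent. -/
lemma iIndepFun_precomp {Ω ι κ : Type*} [MeasurableSpace Ω] {μ : Measure Ω}
    {f : ι → Ω → ℝ} (hf : iIndepFun f μ)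
    (g : κ → ι) (hg : Function.Injective g) :
    iIndepFun (fun k => f (g k)) μ := by
  rw [iIndepFun_iff_measure_inter_preimage_eq_mul] at hf ⊢
  intro S sets hsets
  classical
  set sets' : ι → Set ℝ := fun i =>
    if h : ∃ k ∈ S, g k = i then sets h.choose else Set.univ with hsets'def
  have hsets' : ∀ k ∈ S, sets' (g k) = sets k := by
    intro k hk
    have hex : ∃ k' ∈ S, g k' = g k := ⟨k, hk, rfl⟩
    simp only [hsets'def, dif_pos hex]
    exact congrArg sets (hg hex.choose_spec.2)
  have hmeas : ∀ i, i ∈ S.image g → MeasurableSet (sets' i) := by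
    intro i _
    by_cases h : ∃ k ∈ S, g k = i
    · simp only [hsets'def, dif_pos h]
      exact hsets _ h.choose_spec.1
    · simp only [hsets'def, dif_neg h]
      exact MeasurableSet.univ
  have h1 : (⋂ k ∈ S, f (g k) ⁻¹' sets k) = ⋂ i ∈ S.image g, f i ⁻¹' sets' i := by
    rw [Finset.set_biInter_finset_image]
    exact (Set.iInter₂_congr fun k hk => by rw [hsets' k hk]).symm
  have h2 : (∏ k ∈ S, μ (f (g k) ⁻¹' sets k)) = ∏ i ∈ S.image g, μ (f i ⁻¹' sets' i) := by
    rw [Finset.prod_image (fun a _ b _ hab => hg hab)]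
    exact Finset.prod_congr rfl fun k hk => by rw [hsets' k hk]
  rw [h1, h2]
  exact hf (S.image g) hmeas

/-- **Pointwise Hoeffding bound for the empirical CDF.**  For an i.i.d. sample of size `M`
from `ρ`, the probability that the empirical CDF at a fixed point `x₀` deviates from
`ρ(Iic x₀)` by more than `δ` is at most `2·e^{-2Mδ²}`. -/
lemma ecdf_point_dev {Ω : Type*} [MeasurableSpace Ω] (Pr : Measure Ω) [IsProbabilityMeasure Pr]
    {M : ℕ} (hM : 0 < M) (Z : Fin M → Ω → ℝ) (hZm : ∀ j, Measurable (Z j))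
    (hind : iIndepFun Z Pr)
    (ρ : Measure ℝ) [IsProbabilityMeasure ρ] (hZd : ∀ j, Measure.map (Z j) Pr = ρ)
    (x₀ : ℝ) (δ : ℝ) (hδ : 0 < δ) :
    (Pr {ω | δ < |ecdfFin Z ω x₀ - (ρ (Set.Iic x₀)).toReal|}).toReal
      ≤ 2 * Real.exp (-2 * M * δ ^ 2) := by
  set p := (ρ (Set.Iic x₀)).toReal with hp
  have hp0 : 0 ≤ p := ENNReal.toReal_nonneg
  have hp1 : p ≤ 1 := by
    have h := prob_le_one (μ := ρ) (s := Set.Iic x₀)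
    have := ENNReal.toReal_mono ENNReal.one_ne_top h
    simpa using this
  set gfun : ℝ → ℝ := fun v => (if v ≤ x₀ then (1:ℝ) else 0) - p with hgdef
  have hgmeas : Measurable gfun :=
    (Measurable.ite measurableSet_Iic measurable_const measurable_const).sub measurable_const
  set W : Fin M → Ω → ℝ := fun j ω => gfun (Z j ω) with hWdef
  have hWm : ∀ j, Measurable (W j) := fun j => hgmeas.comp (hZm j)
  have hWind : iIndepFun W Pr :=
    hind.comp (fun _ => gfun) (fun _ => hgmeas)
  have hWbd : ∀ j ω, |W j ω| ≤ 1 := by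
    intro j ω
    rw [abs_le]
    simp only [hWdef, hgdef]
    constructor <;> split <;> simp <;> linarith
  have hmgf : ∀ (j : Fin M) (t : ℝ), mgf (W j) Pr t ≤ Real.exp (t ^ 2 / 8) := by
    intro j t
    have hE : MeasurableSet (Z j ⁻¹' Set.Iic x₀) := (hZm j) measurableSet_Iic
    have hPrE : (Pr (Z j ⁻¹' Set.Iic x₀)).toReal = p := by
      rw [hp, ← hZd j, Measure.map_apply (hZm j) measurableSet_Iic]
    set a := Real.exp (t * (1 - p)) with ha
    set b := Real.exp (-(t * p)) with hb
    have hfun : (fun ω => Real.exp (t * W j ω)) =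
        fun ω => (Z j ⁻¹' Set.Iic x₀).indicator (fun _ => a - b) ω + b := by
      funext ω
      by_cases h : Z j ω ≤ x₀
      · have hmem : ω ∈ Z j ⁻¹' Set.Iic x₀ := h
        rw [Set.indicator_of_mem hmem]
        simp only [hWdef, hgdef, if_pos h, ha]
        rw [sub_add_cancel]
      · have hmem : ω ∉ Z j ⁻¹' Set.Iic x₀ := h
        rw [Set.indicator_of_notMem hmem]
        simp only [hWdef, hgdef, if_neg h, hb, zero_add]
        congr 1
        ring
    have hval : mgf (W j) Pr t = (a - b) * p + b := by
      rw [mgf, hfun, integral_add ((integrable_const (a - b)).indicator hE) (integrable_const b),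
        integral_indicator_const _ hE, integral_const]
      simp [hPrE, mul_comm]
      left; exact hPrE
    calc mgf (W j) Pr t = (a - b) * p + b := hval
      _ = p * a + (1 - p) * b := by ring
      _ ≤ Real.exp (t ^ 2 / 8) := bernoulli_mgf_le hp0 hp1 t
  set S : Ω → ℝ := fun ω => ∑ j, W j ω with hSdef
  have hSm : Measurable S := Finset.measurable_sum Finset.univ (fun j _ => hWm j)
  have hSsum : S = ∑ j, W j := by funext ω; simp [hSdef]
  have hmgfS : ∀ t : ℝ, mgf S Pr t ≤ Real.exp (M * (t ^ 2 / 8)) := by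
    intro t
    rw [hSsum, hWind.mgf_sum hWm]
    calc (∏ j, mgf (W j) Pr t) ≤ ∏ _j : Fin M, Real.exp (t ^ 2 / 8) :=
        Finset.prod_le_prod (fun j _ => mgf_nonneg) (fun j _ => hmgf j t)
      _ = Real.exp (M * (t ^ 2 / 8)) := by
          rw [Finset.prod_const, ← Real.exp_nat_mul]
          simp
  have hSint : ∀ t : ℝ, Integrable (fun ω => Real.exp (t * S ω)) Pr := by
    intro t
    refine Integrable.mono' (integrable_const (Real.exp (|t| * M))) ?_ (ae_of_all _ ?_)
    · exact ((hSm.const_mul t).exp).aestronglyMeasurable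
    · intro ω
      rw [Real.norm_eq_abs, Real.abs_exp]
      apply Real.exp_le_exp.mpr
      have h1 : |S ω| ≤ M := by
        calc |S ω| ≤ ∑ j, |W j ω| := Finset.abs_sum_le_sum_abs _ _
          _ ≤ ∑ _j : Fin M, (1:ℝ) := Finset.sum_le_sum (fun j _ => hWbd j ω)
          _ = M := by simp
      calc t * S ω ≤ |t * S ω| := le_abs_self _
        _ = |t| * |S ω| := abs_mul _ _
        _ ≤ |t| * M := mul_le_mul_of_nonneg_left h1 (abs_nonneg t)
  have hup : (Pr {ω | (M:ℝ) * δ ≤ S ω}).toReal ≤ Real.exp (-2 * M * δ ^ 2) := by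
    have h := measure_ge_le_exp_mul_mgf (μ := Pr) (X := S) (t := 4 * δ) ((M:ℝ) * δ)
      (by positivity) (hSint _)
    refine h.trans ?_
    calc Real.exp (-(4 * δ) * ((M:ℝ) * δ)) * mgf S Pr (4 * δ)
        ≤ Real.exp (-(4 * δ) * ((M:ℝ) * δ)) * Real.exp (M * ((4 * δ) ^ 2 / 8)) :=
          mul_le_mul_of_nonneg_left (hmgfS _) (Real.exp_pos _).le
      _ = Real.exp (-2 * M * δ ^ 2) := by rw [← Real.exp_add]; congr 1; ring
  have hlo : (Pr {ω | S ω ≤ -((M:ℝ) * δ)}).toReal ≤ Real.exp (-2 * M * δ ^ 2) := by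
    have h := measure_le_le_exp_mul_mgf (μ := Pr) (X := S) (t := -(4 * δ)) (-((M:ℝ) * δ))
      (by linarith) (hSint _)
    refine h.trans ?_
    calc Real.exp (-(-(4 * δ)) * (-((M:ℝ) * δ))) * mgf S Pr (-(4 * δ))
        ≤ Real.exp (-(-(4 * δ)) * (-((M:ℝ) * δ))) * Real.exp (M * ((-(4 * δ)) ^ 2 / 8)) :=
          mul_le_mul_of_nonneg_left (hmgfS _) (Real.exp_pos _).le
      _ = Real.exp (-2 * M * δ ^ 2) := by rw [← Real.exp_add]; congr 1; ring
  have hsub : {ω | δ < |ecdfFin Z ω x₀ - p|} ⊆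
      {ω | (M:ℝ) * δ ≤ S ω} ∪ {ω | S ω ≤ -((M:ℝ) * δ)} := by
    intro ω hω
    simp only [Set.mem_setOf_eq] at hω
    have hMpos : (0:ℝ) < M := by exact_mod_cast hM
    have hrepr : ecdfFin Z ω x₀ - p = (M:ℝ)⁻¹ * S ω := by
      simp only [hSdef, hWdef, hgdef, ecdfFin]
      rw [Finset.sum_sub_distrib, Finset.sum_const, Finset.card_univ, Fintype.card_fin]
      field_simp
      rw [nsmul_eq_mul]
    rw [hrepr] at hω
    have habs : (M:ℝ) * δ < |S ω| := by
      rw [abs_mul, abs_of_pos (inv_pos.mpr hMpos)] at hω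
      calc (M:ℝ) * δ < (M:ℝ) * ((M:ℝ)⁻¹ * |S ω|) := (mul_lt_mul_iff_right₀ hMpos).mpr hω
        _ = |S ω| := by field_simp
    rcases lt_abs.mp habs with h | h
    · left; exact le_of_lt h
    · right; simp only [Set.mem_setOf_eq]; linarith
  have hmeast : Pr {ω | δ < |ecdfFin Z ω x₀ - p|} ≤
      Pr {ω | (M:ℝ) * δ ≤ S ω} + Pr {ω | S ω ≤ -((M:ℝ) * δ)} :=
    (measure_mono hsub).trans (measure_union_le _ _)
  calc (Pr {ω | δ < |ecdfFin Z ω x₀ - p|}).toReal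
      ≤ (Pr {ω | (M:ℝ) * δ ≤ S ω} + Pr {ω | S ω ≤ -((M:ℝ) * δ)}).toReal :=
        ENNReal.toReal_mono
          (ENNReal.add_ne_top.mpr ⟨measure_ne_top _ _, measure_ne_top _ _⟩) hmeast
    _ = (Pr {ω | (M:ℝ) * δ ≤ S ω}).toReal + (Pr {ω | S ω ≤ -((M:ℝ) * δ)}).toReal :=
        ENNReal.toReal_add (measure_ne_top _ _) (measure_ne_top _ _)
    _ ≤ Real.exp (-2 * M * δ ^ 2) + Real.exp (-2 * M * δ ^ 2) := add_le_add hup hlo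
    _ = 2 * Real.exp (-2 * M * δ ^ 2) := by ring

/-- **Theorem 3 (Type II error guarantee for the eligibility-set algorithm).**
With candidates `θ₁,…,θ_m`, real data of size `N` from `F^{θ₀}` and simulated samples of
size `n` from each `F^{θᵢ}`, the probability that some candidate whose output CDF is more
than `ε` away (in KS distance) from the truth lies in the eligibility set
`𝓔̂_m^v = {θᵢ : sup_x |F_n^{θᵢ}(x) - F_N^{θ₀}(x)| ≤ √((n+N)/(nN))·√(-½ log(α/2))}` is at
most `2m(e^{-2nε₁²} + e^{-2Nε₂²})` (two-sample variant). -/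
theorem stmt_9
    {Ω : Type*} [MeasurableSpace Ω] (Pr : Measure Ω) [IsProbabilityMeasure Pr]
    (μ : Measure ℝ) [IsProbabilityMeasure μ]
    {N n m : ℕ} (hN0 : 0 < N) (hn0 : 0 < n)
    (ν : Fin m → Measure ℝ) [∀ i, IsProbabilityMeasure (ν i)]
    (X : Fin N → Ω → ℝ) (Y : Fin m → Fin n → Ω → ℝ)
    (hXm : ∀ i, Measurable (X i)) (hYm : ∀ i j, Measurable (Y i j))
    (hindep : iIndepFun
      (Sum.elim X (fun p : Fin m × Fin n => Y p.1 p.2)) Pr)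
    (hX : ∀ k, Measure.map (X k) Pr = μ) (hY : ∀ i j, Measure.map (Y i j) Pr = ν i)
    (α : ℝ) (hα : α ∈ Set.Ioo (0 : ℝ) 1)
    (ε ε₁ ε₂ : ℝ) (hε : 0 < ε) (hε₁ : 0 < ε₁) (hε₂ : 0 < ε₂) (hεsum : ε₁ + ε₂ < ε)
    (hNlarge : ((n : ℝ) * N) / ((n : ℝ) + N) >
      (-(1 / 2) * Real.log (α / 2)) / (ε - ε₁ - ε₂) ^ 2) :
    (Pr {ω | ∃ i : Fin m,
        ε < (⨆ x : ℝ, |(ν i (Set.Iic x)).toReal - (μ (Set.Iic x)).toReal|) ∧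
        (⨆ x : ℝ, |ecdfFin (Y i) ω x - ecdfFin X ω x|) ≤
          Real.sqrt (((n : ℝ) + N) / ((n : ℝ) * N)) *
            Real.sqrt (-(1 / 2) * Real.log (α / 2))}).toReal
      ≤ 2 * m * (Real.exp (-2 * n * ε₁ ^ 2) + Real.exp (-2 * N * ε₂ ^ 2)) := by
  classical
  obtain ⟨hα0, hα1⟩ := hα
  set c : ℝ := -(1 / 2) * Real.log (α / 2) with hc
  have hcpos : 0 < c := by
    have h2 : 0 < α / 2 := by linarith
    have h1 : α / 2 < 1 := by linarith
    have := Real.log_neg h2 h1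
    rw [hc]; linarith
  have hnR : (0:ℝ) < (n:ℝ) := by exact_mod_cast hn0
  have hNR : (0:ℝ) < (N:ℝ) := by exact_mod_cast hN0
  have hnN : (0:ℝ) < (n:ℝ) * N := mul_pos hnR hNR
  have hnNadd : (0:ℝ) < (n:ℝ) + N := by linarith
  set thr : ℝ := Real.sqrt (((n : ℝ) + N) / ((n : ℝ) * N)) * Real.sqrt c with hthrdef
  have hEpos : (0:ℝ) < ε - ε₁ - ε₂ := by linarith
  have hthr : thr < ε - ε₁ - ε₂ := by
    have hA : (0:ℝ) < (n:ℝ) * N / ((n:ℝ) + N) := div_pos hnN hnNadd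
    have h1 : c / (ε - ε₁ - ε₂) ^ 2 < (n:ℝ) * N / ((n:ℝ) + N) := hNlarge
    have h2 : c < (n:ℝ) * N / ((n:ℝ) + N) * (ε - ε₁ - ε₂) ^ 2 := by
      rw [div_lt_iff₀ (pow_pos hEpos 2)] at h1; linarith
    have hsq : thr ^ 2 < (ε - ε₁ - ε₂) ^ 2 := by
      rw [hthrdef, mul_pow, Real.sq_sqrt (le_of_lt (div_pos hnNadd hnN)),
        Real.sq_sqrt hcpos.le]
      rw [div_mul_eq_mul_div, div_lt_iff₀ hnN]
      have h3 : (n:ℝ) * N / ((n:ℝ) + N) * (ε - ε₁ - ε₂) ^ 2 * ((n:ℝ) + N) =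
          (ε - ε₁ - ε₂) ^ 2 * ((n:ℝ) * N) := by field_simp
      nlinarith [mul_lt_mul_of_pos_right h2 hnNadd]
    have hthr0 : 0 ≤ thr := mul_nonneg (Real.sqrt_nonneg _) (Real.sqrt_nonneg _)
    exact lt_of_pow_lt_pow_left₀ 2 hEpos.le hsq
  have hxex : ∀ i : Fin m, ∃ x₀ : ℝ,
      ε < (⨆ x : ℝ, |(ν i (Set.Iic x)).toReal - (μ (Set.Iic x)).toReal|) →
      ε < |(ν i (Set.Iic x₀)).toReal - (μ (Set.Iic x₀)).toReal| := by
    intro i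
    by_cases h : ε < (⨆ x : ℝ, |(ν i (Set.Iic x)).toReal - (μ (Set.Iic x)).toReal|)
    · obtain ⟨x₀, hx₀⟩ := exists_lt_of_lt_ciSup h
      exact ⟨x₀, fun _ => hx₀⟩
    · exact ⟨0, fun h' => absurd h' h⟩
  choose xp hxp using hxex
  set A : Fin m → Set Ω := fun i =>
    {ω | ε₁ < |ecdfFin (Y i) ω (xp i) - ((ν i) (Set.Iic (xp i))).toReal|} with hA
  set B : Fin m → Set Ω := fun i =>
    {ω | ε₂ < |ecdfFin X ω (xp i) - (μ (Set.Iic (xp i))).toReal|} with hB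
  have hsub : {ω | ∃ i : Fin m,
      ε < (⨆ x : ℝ, |(ν i (Set.Iic x)).toReal - (μ (Set.Iic x)).toReal|) ∧
      (⨆ x : ℝ, |ecdfFin (Y i) ω x - ecdfFin X ω x|) ≤ thr} ⊆ ⋃ i, (A i ∪ B i) := by
    rintro ω ⟨i, hKS, hQ⟩
    refine Set.mem_iUnion.mpr ⟨i, ?_⟩
    have hxi := hxp i hKS
    have hbdd : BddAbove (Set.range fun x => |ecdfFin (Y i) ω x - ecdfFin X ω x|) := by
      refine ⟨2, ?_⟩
      rintro r ⟨x, rfl⟩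
      have h1 := ecdfFin_mem_Icc (Y i) ω x
      have h2 := ecdfFin_mem_Icc X ω x
      rw [abs_sub_le_iff]
      constructor <;> linarith [h1.1, h1.2, h2.1, h2.2]
    have hpt : |ecdfFin (Y i) ω (xp i) - ecdfFin X ω (xp i)| ≤ thr :=
      le_trans (le_ciSup hbdd (xp i)) hQ
    by_cases h1 : ε₁ < |ecdfFin (Y i) ω (xp i) - ((ν i) (Set.Iic (xp i))).toReal|
    · exact Set.mem_union_left _ h1
    · push_neg at h1
      refine Set.mem_union_right _ ?_
      show ε₂ < |ecdfFin X ω (xp i) - (μ (Set.Iic (xp i))).toReal|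
      have htri : |(ν i (Set.Iic (xp i))).toReal - (μ (Set.Iic (xp i))).toReal| ≤
          |(ν i (Set.Iic (xp i))).toReal - ecdfFin (Y i) ω (xp i)| +
            (|ecdfFin (Y i) ω (xp i) - ecdfFin X ω (xp i)| +
              |ecdfFin X ω (xp i) - (μ (Set.Iic (xp i))).toReal|) :=
        le_trans (abs_sub_le _ (ecdfFin (Y i) ω (xp i)) _)
          (add_le_add_right (abs_sub_le _ (ecdfFin X ω (xp i)) _) _)
      have h2 : |(ν i (Set.Iic (xp i))).toReal - ecdfFin (Y i) ω (xp i)| ≤ ε₁ := by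
        rw [abs_sub_comm]; exact h1
      by_contra h3
      push_neg at h3
      linarith
  have hmono : Pr {ω | ∃ i : Fin m,
      ε < (⨆ x : ℝ, |(ν i (Set.Iic x)).toReal - (μ (Set.Iic x)).toReal|) ∧
      (⨆ x : ℝ, |ecdfFin (Y i) ω x - ecdfFin X ω x|) ≤ thr} ≤
      ∑ i : Fin m, (Pr (A i) + Pr (B i)) := by
    refine (measure_mono hsub).trans ?_
    refine (measure_iUnion_le _).trans ?_
    rw [tsum_fintype]
    exact Finset.sum_le_sum fun i _ => measure_union_le _ _
  have hfin : ∀ i : Fin m, Pr (A i) + Pr (B i) ≠ ⊤ :=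
    fun i => ENNReal.add_ne_top.mpr ⟨measure_ne_top _ _, measure_ne_top _ _⟩
  calc (Pr {ω | ∃ i : Fin m,
      ε < (⨆ x : ℝ, |(ν i (Set.Iic x)).toReal - (μ (Set.Iic x)).toReal|) ∧
      (⨆ x : ℝ, |ecdfFin (Y i) ω x - ecdfFin X ω x|) ≤ thr}).toReal
      ≤ (∑ i : Fin m, (Pr (A i) + Pr (B i))).toReal := by
        refine ENNReal.toReal_mono ?_ hmono
        exact (ENNReal.sum_lt_top.mpr fun i _ => (hfin i).lt_top).ne
    _ = ∑ i : Fin m, ((Pr (A i)).toReal + (Pr (B i)).toReal) := by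
        rw [ENNReal.toReal_sum (fun i _ => hfin i)]
        exact Finset.sum_congr rfl fun i _ =>
          ENNReal.toReal_add (measure_ne_top _ _) (measure_ne_top _ _)
    _ ≤ ∑ _i : Fin m,
          (2 * Real.exp (-2 * n * ε₁ ^ 2) + 2 * Real.exp (-2 * N * ε₂ ^ 2)) := by
        refine Finset.sum_le_sum fun i _ => ?_
        have hindY : iIndepFun (fun j : Fin n => Y i j) Pr := by
          have := iIndepFun_precomp hindep
            (fun j : Fin n => (Sum.inr (i, j) : Fin N ⊕ Fin m × Fin n))
            (fun a b hab => by simpa using hab)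
          exact this
        have hindX : iIndepFun (fun k : Fin N => X k) Pr := by
          have := iIndepFun_precomp hindep
            (fun k : Fin N => (Sum.inl k : Fin N ⊕ Fin m × Fin n))
            (fun a b hab => by simpa using hab)
          exact this
        have hAbd : (Pr (A i)).toReal ≤ 2 * Real.exp (-2 * n * ε₁ ^ 2) :=
          ecdf_point_dev Pr hn0 (Y i) (fun j => hYm i j) hindY (ν i)
            (fun j => hY i j) (xp i) ε₁ hε₁
        have hBbd : (Pr (B i)).toReal ≤ 2 * Real.exp (-2 * N * ε₂ ^ 2) :=
          ecdf_point_dev Pr hN0 X hXm hindX μ hX (xp i) ε₂ hε₂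
        linarith
    _ = 2 * m * (Real.exp (-2 * n * ε₁ ^ 2) + Real.exp (-2 * N * ε₂ ^ 2)) := by
        rw [Finset.sum_const, Finset.card_univ, Fintype.card_fin, nsmul_eq_mul]
        ring
end

section
/- Let 𝓔̂_m^v = { θ_i : sup_{x∈ℝ} |F_n^{θ_i}(x) − F_N^{θ₀}(x)| ≤ √((n+N)/(nN)) · √(−(1/2)log(α/2)) } be the two-sample eligibility set constructed from an i.i.d. real sample of size N from F^{θ₀}, independent i.i.d. simulated samples of size n from each F^{θ_i}, and candidates θ₁,…,θ_m. If log m = o(N) and n = Ω(N) as N → ∞, then for any ε > 0, lim_{m,n,N→∞} ℙ( ∃ i ∈ {1,…,m} such that sup_{x∈ℝ} |F^{θ_i}(x) − F^{θ₀}(x)| > ε and θ_i ∈ 𝓔̂_m^v ) = 0. -/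
open MeasureTheory ProbabilityTheory Filter
open scoped ENNReal NNReal

/-- Empirical distribution function of the first `M` terms of a sequence of
real-valued random variables. -/
noncomputable def ecdfSeq {Ω : Type*} (Z : ℕ → Ω → ℝ) (M : ℕ) (ω : Ω) (x : ℝ) : ℝ :=
  (M : ℝ)⁻¹ * ∑ i ∈ Finset.range M, if Z i ω ≤ x then (1 : ℝ) else 0


lemma exp_taylor_bound {t : ℝ} (h : |t| ≤ 1) : Real.exp t - 1 - t ≤ t ^ 2 := by
  have h3 := Real.exp_bound h (by norm_num : 0 < 3)
  have h1 : |t| ^ 3 ≤ t ^ 2 := by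
    calc |t| ^ 3 ≤ |t| ^ 2 := pow_le_pow_of_le_one (abs_nonneg t) h (by norm_num)
    _ = t ^ 2 := sq_abs t
  rw [abs_le] at h3
  have h2 := h3.2
  simp [Finset.sum_range_succ] at h2
  have hf : ((Nat.factorial 3 : ℝ)) = 6 := by norm_num [Nat.factorial]
  rw [hf] at h2
  nlinarith [h2, h1]

lemma iIndepFun_comp_inj {Ω ι ι' β : Type*} [MeasurableSpace Ω] [mβ : MeasurableSpace β]
    {μ : Measure Ω} {f : ι → Ω → β} (h : iIndepFun f μ)
    (g : ι' → ι) (hg : Function.Injective g) :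
    iIndepFun (fun i => f (g i)) μ := by
  classical
  rw [iIndepFun_iff_measure_inter_preimage_eq_mul] at h ⊢
  intro S sets hsets
  set sets' : ι → Set β := fun i => if hi : ∃ j, g j = i then sets hi.choose else Set.univ
    with hsets'
  have key : ∀ j, sets' (g j) = sets j := by
    intro j
    have hex : ∃ j', g j' = g j := ⟨j, rfl⟩
    rw [hsets']
    simp only [dif_pos hex]
    exact congrArg sets (hg hex.choose_spec)
  have := h (S.image g) (sets := sets') ?_
  · rw [Finset.set_biInter_finset_image] at this
    rw [Finset.prod_image (fun a _ b _ hab => hg hab)] at this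
    simp only [key] at this
    exact this
  · intro i hi
    obtain ⟨j, hjS, rfl⟩ := Finset.mem_image.mp hi
    rw [key]
    exact hsets j hjS

lemma ecdf_nonneg {Ω : Type*} (Z : ℕ → Ω → ℝ) (M : ℕ) (ω : Ω) (x : ℝ) :
    0 ≤ ecdfSeq Z M ω x := by
  unfold ecdfSeq
  positivity

lemma ecdf_le_one {Ω : Type*} (Z : ℕ → Ω → ℝ) (M : ℕ) (ω : Ω) (x : ℝ) :
    ecdfSeq Z M ω x ≤ 1 := by
  unfold ecdfSeq
  rcases Nat.eq_zero_or_pos M with hM | hM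
  · simp [hM]
  · have hsum : (∑ i ∈ Finset.range M, if Z i ω ≤ x then (1:ℝ) else 0) ≤ M := by
      calc (∑ i ∈ Finset.range M, if Z i ω ≤ x then (1:ℝ) else 0)
          ≤ ∑ _i ∈ Finset.range M, (1:ℝ) := by
            apply Finset.sum_le_sum; intro i _; split <;> norm_num
      _ = M := by simp
    have hMpos : (0:ℝ) < M := by exact_mod_cast hM
    rw [inv_mul_le_iff₀ hMpos]
    simpa using hsum

lemma chernoff_ecdf {Ω : Type*} [MeasurableSpace Ω] (Pr : Measure Ω) [IsProbabilityMeasure Pr]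
    (ρ : Measure ℝ) [IsProbabilityMeasure ρ] (Z : ℕ → Ω → ℝ)
    (hmz : ∀ j, Measurable (Z j))
    (hiz : iIndepFun Z Pr)
    (hdz : ∀ j, Measure.map (Z j) Pr = ρ)
    (x δ : ℝ) (hδ0 : 0 < δ) (hδ1 : δ ≤ 1) (M : ℕ) :
    Pr {ω | δ ≤ |ecdfSeq Z M ω x - (ρ (Set.Iic x)).toReal|} ≤
      ENNReal.ofReal (2 * Real.exp (-M * δ ^ 2 / 4)) := by
  classical
  set p : ℝ := (ρ (Set.Iic x)).toReal with hp
  have hp0 : 0 ≤ p := ENNReal.toReal_nonneg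
  have hp1 : p ≤ 1 := by
    rw [hp]
    exact ENNReal.toReal_le_of_le_ofReal zero_le_one (by simpa using prob_le_one)
  set g : ℝ → ℝ := fun y => if y ≤ x then 1 else 0 with hg
  have hgm : Measurable g := Measurable.ite measurableSet_Iic measurable_const measurable_const
  set B : ℕ → Ω → ℝ := fun j => g ∘ Z j with hB
  have hBmeas : ∀ j, Measurable (B j) := fun j => hgm.comp (hmz j)
  have hBind : iIndepFun B Pr := hiz.comp (fun _ => g) (fun _ => hgm)
  have hB01 : ∀ j ω, B j ω = 0 ∨ B j ω = 1 := by
    intro j ω; by_cases h : Z j ω ≤ x <;> simp [hB, hg, h]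
  have hexp_eq : ∀ (t : ℝ) (j : ℕ),
      (fun ω => Real.exp (t * B j ω)) = fun ω => 1 + (Real.exp t - 1) * B j ω := by
    intro t j; funext ω
    rcases hB01 j ω with h | h <;> rw [h] <;> simp
  have hBind' : ∀ j, B j = Set.indicator (Z j ⁻¹' Set.Iic x) (fun _ => (1:ℝ)) := by
    intro j; funext ω; by_cases h : Z j ω ≤ x <;>
      simp [hB, hg, h, Set.indicator_apply, Set.mem_Iic]
  have hBint : ∀ j, Integrable (B j) Pr := by
    intro j
    rw [hBind' j]
    exact (integrable_const (1:ℝ)).indicator ((hmz j) measurableSet_Iic)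
  have hEB : ∀ j, ∫ ω, B j ω ∂Pr = p := by
    intro j
    rw [hBind' j]
    rw [integral_indicator_const _ ((hmz j) measurableSet_Iic)]
    rw [measureReal_def, ← Measure.map_apply (hmz j) measurableSet_Iic, hdz j]
    simp [hp]
  have hint : ∀ (t : ℝ) (j : ℕ), Integrable (fun ω => Real.exp (t * B j ω)) Pr := by
    intro t j
    rw [hexp_eq t j]
    exact (integrable_const (1:ℝ)).add ((hBint j).const_mul _)
  have hmgf : ∀ (t : ℝ) (j : ℕ), mgf (B j) Pr t = 1 + p * (Real.exp t - 1) := by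
    intro t j
    rw [mgf, hexp_eq t j, integral_add (integrable_const 1) ((hBint j).const_mul _),
      integral_const, integral_const_mul, hEB j]
    simp [mul_comm]
  have hmgfS : ∀ t : ℝ, mgf (∑ j ∈ Finset.range M, B j) Pr t
      = (1 + p * (Real.exp t - 1)) ^ M := by
    intro t
    rw [hBind.mgf_sum hBmeas]
    simp [hmgf t]
  have hmgf_nonneg : ∀ t : ℝ, (0:ℝ) ≤ 1 + p * (Real.exp t - 1) := by
    intro t
    nlinarith [Real.exp_pos t, hp0, hp1]
  have hMpow : ∀ t : ℝ, (1 + p * (Real.exp t - 1)) ^ M ≤ Real.exp (M * (p * (Real.exp t - 1))) := by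
    intro t
    calc (1 + p * (Real.exp t - 1)) ^ M ≤ (Real.exp (p * (Real.exp t - 1))) ^ M := by
          apply pow_le_pow_left₀ (hmgf_nonneg t)
          linarith [Real.add_one_le_exp (p * (Real.exp t - 1))]
    _ = Real.exp (M * (p * (Real.exp t - 1))) := by
          rw [← Real.exp_nat_mul]
  set S : Ω → ℝ := (∑ j ∈ Finset.range M, B j) with hS
  have hup : (Pr {ω | (M:ℝ) * (p + δ) ≤ S ω}).toReal ≤ Real.exp (-M * δ ^ 2 / 4) := by
    set t : ℝ := δ / 2 with htdef
    have ht0 : 0 ≤ t := by positivity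
    have ht1 : |t| ≤ 1 := by rw [abs_of_nonneg ht0]; linarith
    have hcb := measure_ge_le_exp_mul_mgf (μ := Pr) (X := S) ((M:ℝ) * (p + δ)) ht0
      (hBind.integrable_exp_mul_sum hBmeas (fun j _ => hint t j))
    rw [hS] at hcb ⊢
    refine hcb.trans ?_
    rw [hmgfS t]
    calc Real.exp (-t * ((M:ℝ) * (p + δ))) * (1 + p * (Real.exp t - 1)) ^ M
        ≤ Real.exp (-t * ((M:ℝ) * (p + δ))) * Real.exp (M * (p * (Real.exp t - 1))) := by
          apply mul_le_mul_of_nonneg_left (hMpow t) (Real.exp_pos _).le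
    _ = Real.exp (-t * ((M:ℝ) * (p + δ)) + M * (p * (Real.exp t - 1))) := by
          rw [← Real.exp_add]
    _ ≤ Real.exp (-(M:ℝ) * δ ^ 2 / 4) := by
          apply Real.exp_le_exp.mpr
          have h1 : Real.exp t - 1 - t ≤ t ^ 2 := exp_taylor_bound ht1
          have h2 : 0 ≤ Real.exp t - 1 - t := by linarith [Real.add_one_le_exp t]
          have h3 : p * (Real.exp t - 1 - t) ≤ t ^ 2 := by nlinarith
          have hM0 : (0:ℝ) ≤ M := Nat.cast_nonneg M
          have ht2 : t ^ 2 = δ ^ 2 / 4 := by rw [htdef]; ring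
          have h5 : (M:ℝ) * (p * (Real.exp t - 1 - t)) ≤ (M:ℝ) * (δ ^ 2 / 4) := by
            rw [← ht2]; exact mul_le_mul_of_nonneg_left h3 hM0
          have ht4 : (M:ℝ) * (t * δ) = (M:ℝ) * (δ ^ 2 / 2) := by rw [htdef]; ring
          nlinarith [h5, ht4]
  have hlo : (Pr {ω | S ω ≤ (M:ℝ) * (p - δ)}).toReal ≤ Real.exp (-M * δ ^ 2 / 4) := by
    set t : ℝ := -(δ / 2) with htdef
    have ht0 : t ≤ 0 := by rw [htdef]; linarith
    have ht1 : |t| ≤ 1 := by rw [htdef, abs_neg, abs_of_nonneg (by positivity)]; linarith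
    have hcb := measure_le_le_exp_mul_mgf (μ := Pr) (X := S) ((M:ℝ) * (p - δ)) ht0
      (hBind.integrable_exp_mul_sum hBmeas (fun j _ => hint t j))
    rw [hS] at hcb ⊢
    refine hcb.trans ?_
    rw [hmgfS t]
    calc Real.exp (-t * ((M:ℝ) * (p - δ))) * (1 + p * (Real.exp t - 1)) ^ M
        ≤ Real.exp (-t * ((M:ℝ) * (p - δ))) * Real.exp (M * (p * (Real.exp t - 1))) := by
          apply mul_le_mul_of_nonneg_left (hMpow t) (Real.exp_pos _).le
    _ = Real.exp (-t * ((M:ℝ) * (p - δ)) + M * (p * (Real.exp t - 1))) := by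
          rw [← Real.exp_add]
    _ ≤ Real.exp (-(M:ℝ) * δ ^ 2 / 4) := by
          apply Real.exp_le_exp.mpr
          have h1 : Real.exp t - 1 - t ≤ t ^ 2 := exp_taylor_bound ht1
          have h2 : 0 ≤ Real.exp t - 1 - t := by linarith [Real.add_one_le_exp t]
          have h3 : p * (Real.exp t - 1 - t) ≤ t ^ 2 := by nlinarith
          have hM0 : (0:ℝ) ≤ M := Nat.cast_nonneg M
          have ht2 : t ^ 2 = δ ^ 2 / 4 := by rw [htdef]; ring
          have h5 : (M:ℝ) * (p * (Real.exp t - 1 - t)) ≤ (M:ℝ) * (δ ^ 2 / 4) := by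
            rw [← ht2]; exact mul_le_mul_of_nonneg_left h3 hM0
          have ht4 : (M:ℝ) * (t * δ) = -((M:ℝ) * (δ ^ 2 / 2)) := by rw [htdef]; ring
          nlinarith [h5, ht4]
  -- inclusion
  have hsub : {ω | δ ≤ |ecdfSeq Z M ω x - p|} ⊆
      {ω | (M:ℝ) * (p + δ) ≤ S ω} ∪ {ω | S ω ≤ (M:ℝ) * (p - δ)} := by
    intro ω hω
    have hSsum : S ω = ∑ j ∈ Finset.range M, B j ω := by rw [hS]; simp
    have hecdf : ecdfSeq Z M ω x = (M:ℝ)⁻¹ * S ω := by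
      rw [hSsum, ecdfSeq]
      congr 1
    have hω' : δ ≤ |ecdfSeq Z M ω x - p| := hω
    rcases Nat.eq_zero_or_pos M with hM | hM
    · left
      have hS0 : S ω = 0 := by simp [hSsum, hM]
      show (M:ℝ) * (p + δ) ≤ S ω
      simp [hS0, hM]
    · have hMpos : (0:ℝ) < M := by exact_mod_cast hM
      have hinv : (M:ℝ) * ((M:ℝ)⁻¹ * S ω) = S ω := by field_simp
      rcases le_abs.mp hω' with h | h
      · left
        show (M:ℝ) * (p + δ) ≤ S ω
        rw [hecdf] at h
        nlinarith
      · right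
        show S ω ≤ (M:ℝ) * (p - δ)
        rw [hecdf] at h
        nlinarith
  calc Pr {ω | δ ≤ |ecdfSeq Z M ω x - p|}
      ≤ Pr ({ω | (M:ℝ) * (p + δ) ≤ S ω} ∪ {ω | S ω ≤ (M:ℝ) * (p - δ)}) := measure_mono hsub
  _ ≤ Pr {ω | (M:ℝ) * (p + δ) ≤ S ω} + Pr {ω | S ω ≤ (M:ℝ) * (p - δ)} := measure_union_le _ _
  _ ≤ ENNReal.ofReal (Real.exp (-M * δ ^ 2 / 4)) + ENNReal.ofReal (Real.exp (-M * δ ^ 2 / 4)) := by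
      gcongr
      · exact (ENNReal.le_ofReal_iff_toReal_le (measure_ne_top _ _) (Real.exp_pos _).le).mpr hup
      · exact (ENNReal.le_ofReal_iff_toReal_le (measure_ne_top _ _) (Real.exp_pos _).le).mpr hlo
  _ = ENNReal.ofReal (2 * Real.exp (-M * δ ^ 2 / 4)) := by
      rw [← ENNReal.ofReal_add (Real.exp_pos _).le (Real.exp_pos _).le]
      ring_nf


set_option maxHeartbeats 2000000 in
/-- **Corollary 1.** If `log m = o(N)` and `n = Ω(N)`, then for any `ε > 0` the probability
that some candidate `θᵢ` with `sup_x |F^{θᵢ}(x) - F^{θ₀}(x)| > ε` lies in the eligibility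
set `𝓔̂_m^v` tends to `0` as `m, n, N → ∞`. -/
theorem stmt_10
    {Ω : Type*} [MeasurableSpace Ω] (Pr : Measure Ω) [IsProbabilityMeasure Pr]
    (μ : Measure ℝ) [IsProbabilityMeasure μ]
    (ν : ℕ → Measure ℝ) [∀ i, IsProbabilityMeasure (ν i)]
    (X : ℕ → Ω → ℝ) (Y : ℕ → ℕ → Ω → ℝ)
    (hXm : ∀ i, Measurable (X i)) (hYm : ∀ i j, Measurable (Y i j))
    (hindep : iIndepFun
      (Sum.elim X (fun p : ℕ × ℕ => Y p.1 p.2)) Pr)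
    (hX : ∀ k, Measure.map (X k) Pr = μ) (hY : ∀ i j, Measure.map (Y i j) Pr = ν i)
    (α : ℝ) (hα : α ∈ Set.Ioo (0 : ℝ) 1)
    (m n : ℕ → ℕ)
    (hm : Tendsto m atTop atTop) (hn : Tendsto n atTop atTop)
    -- `log m = o(N)`
    (hlogm : Tendsto (fun N => Real.log (m N) / (N : ℝ)) atTop (nhds 0))
    -- `n = Ω(N)`
    (hnN : ∃ c > (0 : ℝ), ∀ᶠ N : ℕ in atTop, c * (N : ℝ) ≤ (n N : ℝ))
    (ε : ℝ) (hε : 0 < ε) :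
    Tendsto (fun N =>
      (Pr {ω | ∃ i < m N,
        ε < (⨆ x : ℝ, |(ν i (Set.Iic x)).toReal - (μ (Set.Iic x)).toReal|) ∧
        (⨆ x : ℝ, |ecdfSeq (Y i) (n N) ω x - ecdfSeq X N ω x|) ≤
          Real.sqrt (((n N : ℝ) + N) / ((n N : ℝ) * N)) *
            Real.sqrt (-(1 / 2) * Real.log (α / 2))}).toReal)
      atTop (nhds 0) := by
  classical
  obtain ⟨hα0, hα1⟩ := hα
  obtain ⟨c, hc0, hcN⟩ := hnN
  set δ : ℝ := min (ε / 4) 1 with hδdef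
  have hδ0 : 0 < δ := lt_min (by linarith) one_pos
  have hδ1 : δ ≤ 1 := min_le_right _ _
  have hδε : δ ≤ ε / 4 := min_le_left _ _
  set thr : ℕ → ℝ := fun N => Real.sqrt (((n N : ℝ) + N) / ((n N : ℝ) * N)) *
      Real.sqrt (-(1 / 2) * Real.log (α / 2)) with hthrdef
  -- threshold tends to 0
  have hthr0 : Tendsto thr atTop (nhds 0) := by
    have hnn : Tendsto (fun N : ℕ => ((n N : ℝ))⁻¹) atTop (nhds 0) :=
      (tendsto_natCast_atTop_atTop.comp hn).inv_tendsto_atTop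
    have hNN : Tendsto (fun N : ℕ => ((N : ℝ))⁻¹) atTop (nhds 0) :=
      tendsto_inv_atTop_nhds_zero_nat
    have hsum : Tendsto (fun N : ℕ => ((n N : ℝ))⁻¹ + ((N : ℝ))⁻¹) atTop (nhds 0) := by
      simpa using hnn.add hNN
    have hfrac : Tendsto (fun N : ℕ => ((n N : ℝ) + N) / ((n N : ℝ) * N)) atTop (nhds 0) := by
      refine hsum.congr' ?_
      filter_upwards [hn.eventually_ge_atTop 1, eventually_ge_atTop 1] with N hn1 hN1
      have h1 : (0:ℝ) < (n N : ℝ) := by exact_mod_cast hn1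
      have h2 : (0:ℝ) < (N : ℝ) := by exact_mod_cast hN1
      field_simp
      ring
    have hs : Tendsto (fun N : ℕ => Real.sqrt (((n N : ℝ) + N) / ((n N : ℝ) * N)))
        atTop (nhds 0) := by
      have h := (Real.continuous_sqrt.tendsto 0).comp hfrac
      rw [Real.sqrt_zero] at h
      exact h
    have h := hs.mul_const (Real.sqrt (-(1 / 2) * Real.log (α / 2)))
    rw [zero_mul] at h
    exact h
  have hev1 : ∀ᶠ N : ℕ in atTop, thr N < ε / 2 := hthr0.eventually_lt_const (by linarith)
  -- the eventual bound
  have hmain : ∀ᶠ N : ℕ in atTop,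
      (Pr {ω | ∃ i < m N,
        ε < (⨆ x : ℝ, |(ν i (Set.Iic x)).toReal - (μ (Set.Iic x)).toReal|) ∧
        (⨆ x : ℝ, |ecdfSeq (Y i) (n N) ω x - ecdfSeq X N ω x|) ≤
          Real.sqrt (((n N : ℝ) + N) / ((n N : ℝ) * N)) *
            Real.sqrt (-(1 / 2) * Real.log (α / 2))}).toReal ≤
      2 * ((m N : ℝ) * Real.exp (-(c * δ ^ 2 / 4) * N)) +
        2 * ((m N : ℝ) * Real.exp (-(δ ^ 2 / 4) * N)) := by
    filter_upwards [hev1, hcN] with N hthrN hcn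
    set Ei : ℕ → Set Ω := fun i => {ω |
        ε < (⨆ x : ℝ, |(ν i (Set.Iic x)).toReal - (μ (Set.Iic x)).toReal|) ∧
        (⨆ x : ℝ, |ecdfSeq (Y i) (n N) ω x - ecdfSeq X N ω x|) ≤ thr N} with hEidef
    have hEunion : {ω | ∃ i < m N,
        ε < (⨆ x : ℝ, |(ν i (Set.Iic x)).toReal - (μ (Set.Iic x)).toReal|) ∧
        (⨆ x : ℝ, |ecdfSeq (Y i) (n N) ω x - ecdfSeq X N ω x|) ≤
          Real.sqrt (((n N : ℝ) + N) / ((n N : ℝ) * N)) *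
            Real.sqrt (-(1 / 2) * Real.log (α / 2))} = ⋃ i ∈ Finset.range (m N), Ei i := by
      ext ω
      simp only [hEidef, hthrdef, Set.mem_setOf_eq, Set.mem_iUnion, Finset.mem_range, exists_prop]
    have hEi : ∀ i, Pr (Ei i) ≤ ENNReal.ofReal
        (2 * Real.exp (-(n N : ℝ) * δ ^ 2 / 4) + 2 * Real.exp (-(N : ℝ) * δ ^ 2 / 4)) := by
      intro i
      by_cases hgap : ε < ⨆ x : ℝ, |(ν i (Set.Iic x)).toReal - (μ (Set.Iic x)).toReal|
      · obtain ⟨x₀, hx₀⟩ := exists_lt_of_lt_ciSup hgap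
        have hYind : iIndepFun (fun j => Y i j) Pr := by
          have hinj : Function.Injective (fun j : ℕ => (Sum.inr (i, j) : ℕ ⊕ ℕ × ℕ)) := by
            intro a b hab
            simpa using hab
          exact iIndepFun_comp_inj hindep (fun j : ℕ => (Sum.inr (i, j) : ℕ ⊕ ℕ × ℕ)) hinj
        have hXind : iIndepFun X Pr :=
          iIndepFun_comp_inj hindep Sum.inl Sum.inl_injective
        have hCY := chernoff_ecdf Pr (ν i) (fun j => Y i j) (hYm i) hYind (hY i)
          x₀ δ hδ0 hδ1 (n N)
        have hCX := chernoff_ecdf Pr μ X hXm hXind hX x₀ δ hδ0 hδ1 N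
        have hsub2 : Ei i ⊆
            {ω | δ ≤ |ecdfSeq (Y i) (n N) ω x₀ - (ν i (Set.Iic x₀)).toReal|} ∪
            {ω | δ ≤ |ecdfSeq X N ω x₀ - (μ (Set.Iic x₀)).toReal|} := by
          rintro ω ⟨-, hKS⟩
          have hBdd : BddAbove (Set.range fun x : ℝ =>
              |ecdfSeq (Y i) (n N) ω x - ecdfSeq X N ω x|) := by
            refine ⟨2, ?_⟩
            rintro - ⟨x, rfl⟩
            have h1 := ecdf_nonneg (Y i) (n N) ω x
            have h2 := ecdf_le_one (Y i) (n N) ω x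
            have h3 := ecdf_nonneg X N ω x
            have h4 := ecdf_le_one X N ω x
            rw [abs_sub_le_iff]
            constructor <;> linarith
          have hpt : |ecdfSeq (Y i) (n N) ω x₀ - ecdfSeq X N ω x₀| ≤ thr N :=
            le_trans (le_ciSup hBdd x₀) hKS
          by_cases h1 : δ ≤ |ecdfSeq (Y i) (n N) ω x₀ - (ν i (Set.Iic x₀)).toReal|
          · exact Or.inl h1
          · right
            show δ ≤ |ecdfSeq X N ω x₀ - (μ (Set.Iic x₀)).toReal|
            push_neg at h1
            by_contra h2
            push_neg at h2
            have t1 : |(ν i (Set.Iic x₀)).toReal - (μ (Set.Iic x₀)).toReal| ≤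
                |(ν i (Set.Iic x₀)).toReal - ecdfSeq (Y i) (n N) ω x₀| +
                |ecdfSeq (Y i) (n N) ω x₀ - ecdfSeq X N ω x₀| +
                |ecdfSeq X N ω x₀ - (μ (Set.Iic x₀)).toReal| := by
              have := abs_sub_le ((ν i (Set.Iic x₀)).toReal) (ecdfSeq (Y i) (n N) ω x₀)
                ((μ (Set.Iic x₀)).toReal)
              have h2' := abs_sub_le (ecdfSeq (Y i) (n N) ω x₀) (ecdfSeq X N ω x₀)
                ((μ (Set.Iic x₀)).toReal)
              linarith
            have hcomm : |(ν i (Set.Iic x₀)).toReal - ecdfSeq (Y i) (n N) ω x₀| =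
                |ecdfSeq (Y i) (n N) ω x₀ - (ν i (Set.Iic x₀)).toReal| := abs_sub_comm _ _
            linarith
        calc Pr (Ei i) ≤ Pr ({ω | δ ≤ |ecdfSeq (Y i) (n N) ω x₀ - (ν i (Set.Iic x₀)).toReal|} ∪
              {ω | δ ≤ |ecdfSeq X N ω x₀ - (μ (Set.Iic x₀)).toReal|}) := measure_mono hsub2
        _ ≤ Pr {ω | δ ≤ |ecdfSeq (Y i) (n N) ω x₀ - (ν i (Set.Iic x₀)).toReal|} +
              Pr {ω | δ ≤ |ecdfSeq X N ω x₀ - (μ (Set.Iic x₀)).toReal|} := measure_union_le _ _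
        _ ≤ ENNReal.ofReal (2 * Real.exp (-(n N : ℝ) * δ ^ 2 / 4)) +
              ENNReal.ofReal (2 * Real.exp (-(N : ℝ) * δ ^ 2 / 4)) := add_le_add hCY hCX
        _ = ENNReal.ofReal (2 * Real.exp (-(n N : ℝ) * δ ^ 2 / 4) +
              2 * Real.exp (-(N : ℝ) * δ ^ 2 / 4)) := by
            rw [← ENNReal.ofReal_add (by positivity) (by positivity)]
      · have hempty : Ei i = ∅ := by
          ext ω
          simp only [hEidef, Set.mem_setOf_eq, Set.mem_empty_iff_false, iff_false, not_and]
          intro h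
          exact absurd h hgap
        rw [hempty]
        simp
    have hPrle : Pr {ω | ∃ i < m N,
        ε < (⨆ x : ℝ, |(ν i (Set.Iic x)).toReal - (μ (Set.Iic x)).toReal|) ∧
        (⨆ x : ℝ, |ecdfSeq (Y i) (n N) ω x - ecdfSeq X N ω x|) ≤
          Real.sqrt (((n N : ℝ) + N) / ((n N : ℝ) * N)) *
            Real.sqrt (-(1 / 2) * Real.log (α / 2))} ≤
        ENNReal.ofReal ((m N : ℝ) * (2 * Real.exp (-(n N : ℝ) * δ ^ 2 / 4) +
          2 * Real.exp (-(N : ℝ) * δ ^ 2 / 4))) := by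
      rw [hEunion]
      calc Pr (⋃ i ∈ Finset.range (m N), Ei i) ≤ ∑ i ∈ Finset.range (m N), Pr (Ei i) :=
            measure_biUnion_finset_le _ _
      _ ≤ ∑ _i ∈ Finset.range (m N), ENNReal.ofReal
            (2 * Real.exp (-(n N : ℝ) * δ ^ 2 / 4) + 2 * Real.exp (-(N : ℝ) * δ ^ 2 / 4)) :=
            Finset.sum_le_sum fun i _ => hEi i
      _ = (m N : ℝ≥0∞) * ENNReal.ofReal
            (2 * Real.exp (-(n N : ℝ) * δ ^ 2 / 4) + 2 * Real.exp (-(N : ℝ) * δ ^ 2 / 4)) := by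
            rw [Finset.sum_const, Finset.card_range, nsmul_eq_mul]
      _ = ENNReal.ofReal ((m N : ℝ) * (2 * Real.exp (-(n N : ℝ) * δ ^ 2 / 4) +
            2 * Real.exp (-(N : ℝ) * δ ^ 2 / 4))) := by
            rw [ENNReal.ofReal_mul (Nat.cast_nonneg _), ENNReal.ofReal_natCast]
    have h1 : (Pr {ω | ∃ i < m N,
        ε < (⨆ x : ℝ, |(ν i (Set.Iic x)).toReal - (μ (Set.Iic x)).toReal|) ∧
        (⨆ x : ℝ, |ecdfSeq (Y i) (n N) ω x - ecdfSeq X N ω x|) ≤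
          Real.sqrt (((n N : ℝ) + N) / ((n N : ℝ) * N)) *
            Real.sqrt (-(1 / 2) * Real.log (α / 2))}).toReal ≤
        (m N : ℝ) * (2 * Real.exp (-(n N : ℝ) * δ ^ 2 / 4) +
          2 * Real.exp (-(N : ℝ) * δ ^ 2 / 4)) := by
      refine le_trans (ENNReal.toReal_mono ENNReal.ofReal_ne_top hPrle) ?_
      rw [ENNReal.toReal_ofReal (by positivity)]
    refine le_trans h1 ?_
    have hee : Real.exp (-(n N : ℝ) * δ ^ 2 / 4) ≤ Real.exp (-(c * δ ^ 2 / 4) * N) := by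
      apply Real.exp_le_exp.mpr
      nlinarith [mul_le_mul_of_nonneg_right hcn (sq_nonneg δ)]
    have hee2 : Real.exp (-(N : ℝ) * δ ^ 2 / 4) = Real.exp (-(δ ^ 2 / 4) * N) := by
      ring_nf
    have hm0 : (0 : ℝ) ≤ (m N : ℝ) := Nat.cast_nonneg _
    nlinarith [mul_le_mul_of_nonneg_left hee hm0, hee2, Real.exp_pos (-(N : ℝ) * δ ^ 2 / 4)]
  -- the bound tends to zero
  have hkey : ∀ a : ℝ, 0 < a →
      Tendsto (fun N : ℕ => (m N : ℝ) * Real.exp (-a * N)) atTop (nhds 0) := by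
    intro a ha
    have h2 : Tendsto (fun N : ℕ => (N : ℝ) * (Real.log (m N) / N - a)) atTop atBot :=
      Tendsto.atTop_mul_neg (by linarith : -a < 0) tendsto_natCast_atTop_atTop
        (by simpa using hlogm.sub_const a)
    have h3 : Tendsto (fun N : ℕ => Real.log (m N) - a * N) atTop atBot := by
      refine h2.congr' ?_
      filter_upwards [eventually_ge_atTop 1] with N hN1
      have hN0 : ((N : ℝ)) ≠ 0 := by positivity
      field_simp
    have h4 := Real.tendsto_exp_atBot.comp h3
    refine h4.congr' ?_
    filter_upwards [hm.eventually_ge_atTop 1] with N hm1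
    have hmpos : (0 : ℝ) < (m N : ℝ) := by exact_mod_cast hm1
    show Real.exp (Real.log (m N) - a * N) = (m N : ℝ) * Real.exp (-a * N)
    rw [Real.exp_sub, Real.exp_log hmpos, neg_mul, Real.exp_neg]
    ring
  have hb0 : Tendsto (fun N : ℕ =>
      2 * ((m N : ℝ) * Real.exp (-(c * δ ^ 2 / 4) * N)) +
        2 * ((m N : ℝ) * Real.exp (-(δ ^ 2 / 4) * N))) atTop (nhds 0) := by
    have t1 := (hkey (c * δ ^ 2 / 4) (by positivity)).const_mul 2
    have t2 := (hkey (δ ^ 2 / 4) (by positivity)).const_mul 2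
    simpa using t1.add t2
  exact squeeze_zero' (Eventually.of_forall fun N => ENNReal.toReal_nonneg) hmain hb0
end
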